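/- arXiv:1102.3294 — 2 statements merged into one kernel-verified Lean document; each statement's English description precedes it below -/
import Mathlib

section
/- For jointly distributed random variables X^n = (X_0,...,X_n) and Y^n = (Y_0,...,Y_n) on finite alphabets, the mutual information decomposes as I(X^n; Y^n) = I(X^n → Y^n) + I(X^n ← Y^n), where I(X^n → Y^n) = Σ_{i=0}^n I(X^i; Y_i | Y^{i-1}) and I(X^n ← Y^n) = Σ_{i=0}^n I(Y^{i-1}; X_i | X^{i-1}). -/
open Finset
open scoped Classical

/-- Probability of an event under a pmf `p` on a finite sample space. -/
noncomputable def pr {Ω : Type} [Fintype Ω] (p : Ω → ℝ) (E : Ω → Prop) : ℝ :=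
  ∑ ω, if E ω then p ω else 0

/-- Conditional mutual information `I(f; g | h)` of random variables on a finite
sample space, via `I(A;B|C) = E[log (p(a,b,c) p(c) / (p(a,c) p(b,c)))]`. -/
noncomputable def condMI {Ω A B C : Type} [Fintype Ω] (p : Ω → ℝ)
    (f : Ω → A) (g : Ω → B) (h : Ω → C) : ℝ :=
  ∑ ω, p ω * Real.log
    ((pr p (fun ω' => f ω' = f ω ∧ g ω' = g ω ∧ h ω' = h ω) *
      pr p (fun ω' => h ω' = h ω)) /
     (pr p (fun ω' => f ω' = f ω ∧ h ω' = h ω) *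
      pr p (fun ω' => g ω' = g ω ∧ h ω' = h ω)))

/-- Mutual information `I(f; g)`. -/
noncomputable def mutInfoRV {Ω A B : Type} [Fintype Ω] (p : Ω → ℝ)
    (f : Ω → A) (g : Ω → B) : ℝ :=
  condMI p f g (fun _ => ())

/-- The prefix `Z^i = (Z_0, …, Z_i)` of a sequence-valued random variable. -/
def pref {Ω α : Type} {n : ℕ} (Z : Ω → Fin (n + 1) → α) (i : Fin (n + 1)) :
    Ω → Fin (i.1 + 1) → α :=
  fun ω j => Z ω (Fin.castLE i.isLt j)

/-- The strict prefix `Z^{i-1} = (Z_0, …, Z_{i-1})`. -/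
def spref {Ω α : Type} {n : ℕ} (Z : Ω → Fin (n + 1) → α) (i : Fin (n + 1)) :
    Ω → Fin i.1 → α :=
  fun ω j => Z ω (Fin.castLE i.isLt.le j)

/-- Directed information `I(X^n → Y^n) = ∑_{i=0}^n I(X^i; Y_i | Y^{i-1})`. -/
noncomputable def dirInfo {Ω 𝒳 𝒴 : Type} [Fintype Ω] {n : ℕ} (p : Ω → ℝ)
    (X : Ω → Fin (n + 1) → 𝒳) (Y : Ω → Fin (n + 1) → 𝒴) : ℝ :=
  ∑ i : Fin (n + 1), condMI p (pref X i) (fun ω => Y ω i) (spref Y i)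

/-- Reverse directed information `I(X^n ← Y^n) = ∑_{i=0}^n I(Y^{i-1}; X_i | X^{i-1})`. -/
noncomputable def revDirInfo {Ω 𝒳 𝒴 : Type} [Fintype Ω] {n : ℕ} (p : Ω → ℝ)
    (X : Ω → Fin (n + 1) → 𝒳) (Y : Ω → Fin (n + 1) → 𝒴) : ℝ :=
  ∑ i : Fin (n + 1), condMI p (spref Y i) (fun ω => X ω i) (spref X i)

/-- Conditional independence of `f` and `g` given `h` (a Markov chain `f ↔ h ↔ g`),
stated via factorization of joint probability mass functions. -/
def CondIndep {Ω A B C : Type} [Fintype Ω] (p : Ω → ℝ)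
    (f : Ω → A) (g : Ω → B) (h : Ω → C) : Prop :=
  ∀ (a : A) (b : B) (c : C),
    pr p (fun ω => f ω = a ∧ g ω = b ∧ h ω = c) * pr p (fun ω => h ω = c) =
    pr p (fun ω => f ω = a ∧ h ω = c) * pr p (fun ω => g ω = b ∧ h ω = c)

set_option linter.unusedSectionVars false

section Aux
variable {Ω 𝒳 𝒴 : Type} [Fintype Ω] {n : ℕ}

lemma pr_congr (p : Ω → ℝ) {E F : Ω → Prop} (h : ∀ ω, E ω ↔ F ω) :
    pr p E = pr p F :=
  Finset.sum_congr rfl fun ω _ => by simp [h ω]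

lemma pr_one {p : Ω → ℝ} (hsum : ∑ ω, p ω = 1) {E : Ω → Prop} (h : ∀ ω, E ω) :
    pr p E = 1 := by
  rw [← hsum]; exact Finset.sum_congr rfl fun ω _ => by simp [h ω]

lemma pr_pos {p : Ω → ℝ} (hp : ∀ ω, 0 ≤ p ω) {E : Ω → Prop} {ω : Ω}
    (hE : E ω) (hpω : 0 < p ω) : 0 < pr p E := by
  refine Finset.sum_pos' (fun ω' _ => ?_) ⟨ω, Finset.mem_univ ω, by simp [hE, hpω]⟩
  split_ifs with h
  · exact hp ω'
  · exact le_refl 0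

lemma pref_eq_iff {α : Type} (Z : Ω → Fin (n+1) → α) (i : Fin (n+1)) (ω' ω : Ω) :
    pref Z i ω' = pref Z i ω ↔ ∀ j : Fin (n+1), (j : ℕ) < i.1 + 1 → Z ω' j = Z ω j := by
  constructor
  · intro h j hj
    exact congrFun h ⟨j.1, hj⟩
  · intro h
    funext j
    exact h (Fin.castLE i.isLt j) j.isLt

lemma spref_eq_iff {α : Type} (Z : Ω → Fin (n+1) → α) (i : Fin (n+1)) (ω' ω : Ω) :
    spref Z i ω' = spref Z i ω ↔ ∀ j : Fin (n+1), (j : ℕ) < i.1 → Z ω' j = Z ω j := by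
  constructor
  · intro h j hj
    exact congrFun h ⟨j.1, hj⟩
  · intro h
    funext j
    exact h (Fin.castLE i.isLt.le j) j.isLt

lemma agree_succ_iff {α : Type} (Z : Ω → Fin (n+1) → α) (i : Fin (n+1)) (ω' ω : Ω) :
    (Z ω' i = Z ω i ∧ ∀ j : Fin (n+1), (j : ℕ) < i.1 → Z ω' j = Z ω j) ↔
      ∀ j : Fin (n+1), (j : ℕ) < i.1 + 1 → Z ω' j = Z ω j := by
  constructor
  · rintro ⟨h1, h2⟩ j hj
    rcases Nat.lt_succ_iff_lt_or_eq.mp hj with hj' | hj'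
    · exact h2 j hj'
    · have : j = i := Fin.ext hj'
      rw [this]; exact h1
  · intro h
    exact ⟨h i (Nat.lt_succ_self _), fun j hj => h j (Nat.lt_succ_of_lt hj)⟩

lemma fun_eq_iff {α : Type} (Z : Ω → Fin (n+1) → α) (ω' ω : Ω) :
    Z ω' = Z ω ↔ ∀ j : Fin (n+1), (j : ℕ) < n + 1 → Z ω' j = Z ω j := by
  constructor
  · intro h j _; exact congrFun h j
  · intro h; funext j; exact h j j.isLt



noncomputable def prAgree {α : Type} (p : Ω → ℝ) (Z : Ω → Fin (n+1) → α)
    (ω : Ω) (k : ℕ) : ℝ :=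
  pr p (fun ω' => ∀ j : Fin (n+1), (j : ℕ) < k → Z ω' j = Z ω j)

noncomputable def prAgree2 (p : Ω → ℝ) (X : Ω → Fin (n+1) → 𝒳)
    (Y : Ω → Fin (n+1) → 𝒴) (ω : Ω) (k l : ℕ) : ℝ :=
  pr p (fun ω' => (∀ j : Fin (n+1), (j : ℕ) < k → X ω' j = X ω j) ∧
                  (∀ j : Fin (n+1), (j : ℕ) < l → Y ω' j = Y ω j))

lemma prAgree_pos {α : Type} {p : Ω → ℝ} (hp : ∀ ω, 0 ≤ p ω)
    (Z : Ω → Fin (n+1) → α) {ω : Ω} (hpω : 0 < p ω) (k : ℕ) :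
    0 < prAgree p Z ω k :=
  pr_pos hp (fun _ _ => rfl) hpω

lemma prAgree2_pos {p : Ω → ℝ} (hp : ∀ ω, 0 ≤ p ω)
    (X : Ω → Fin (n+1) → 𝒳) (Y : Ω → Fin (n+1) → 𝒴) {ω : Ω} (hpω : 0 < p ω) (k l : ℕ) :
    0 < prAgree2 p X Y ω k l :=
  pr_pos hp ⟨fun _ _ => rfl, fun _ _ => rfl⟩ hpω

lemma prAgree_zero {α : Type} {p : Ω → ℝ} (hsum : ∑ ω, p ω = 1)
    (Z : Ω → Fin (n+1) → α) (ω : Ω) : prAgree p Z ω 0 = 1 :=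
  pr_one hsum (fun ω' => by intro j hj; omega)

lemma prAgree2_zero {p : Ω → ℝ} (hsum : ∑ ω, p ω = 1)
    (X : Ω → Fin (n+1) → 𝒳) (Y : Ω → Fin (n+1) → 𝒴) (ω : Ω) :
    prAgree2 p X Y ω 0 0 = 1 :=
  pr_one hsum (fun ω' => ⟨fun j hj => absurd hj (by omega), fun j hj => absurd hj (by omega)⟩)

lemma dterm_eq (p : Ω → ℝ) (X : Ω → Fin (n+1) → 𝒳) (Y : Ω → Fin (n+1) → 𝒴)
    (i : Fin (n+1)) (ω : Ω) :
    (pr p (fun ω' => pref X i ω' = pref X i ω ∧ Y ω' i = Y ω i ∧ spref Y i ω' = spref Y i ω) *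
      pr p (fun ω' => spref Y i ω' = spref Y i ω)) /
    (pr p (fun ω' => pref X i ω' = pref X i ω ∧ spref Y i ω' = spref Y i ω) *
      pr p (fun ω' => Y ω' i = Y ω i ∧ spref Y i ω' = spref Y i ω)) =
    (prAgree2 p X Y ω (i.1+1) (i.1+1) * prAgree p Y ω i.1) /
    (prAgree2 p X Y ω (i.1+1) i.1 * prAgree p Y ω (i.1+1)) := by
  have e1 : pr p (fun ω' => pref X i ω' = pref X i ω ∧ Y ω' i = Y ω i ∧
      spref Y i ω' = spref Y i ω) = prAgree2 p X Y ω (i.1+1) (i.1+1) := by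
    refine pr_congr p fun ω' => ?_
    simp only [prAgree2, pref_eq_iff, spref_eq_iff, ← agree_succ_iff] <;> tauto
  have e2 : pr p (fun ω' => spref Y i ω' = spref Y i ω) = prAgree p Y ω i.1 := by
    refine pr_congr p fun ω' => ?_
    simp only [prAgree, spref_eq_iff]
  have e3 : pr p (fun ω' => pref X i ω' = pref X i ω ∧ spref Y i ω' = spref Y i ω) =
      prAgree2 p X Y ω (i.1+1) i.1 := by
    refine pr_congr p fun ω' => ?_
    simp only [prAgree2, pref_eq_iff, spref_eq_iff]
  have e4 : pr p (fun ω' => Y ω' i = Y ω i ∧ spref Y i ω' = spref Y i ω) =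
      prAgree p Y ω (i.1+1) := by
    refine pr_congr p fun ω' => ?_
    simp only [prAgree, spref_eq_iff, ← agree_succ_iff]
  rw [e1, e2, e3, e4]

lemma rterm_eq (p : Ω → ℝ) (X : Ω → Fin (n+1) → 𝒳) (Y : Ω → Fin (n+1) → 𝒴)
    (i : Fin (n+1)) (ω : Ω) :
    (pr p (fun ω' => spref Y i ω' = spref Y i ω ∧ X ω' i = X ω i ∧ spref X i ω' = spref X i ω) *
      pr p (fun ω' => spref X i ω' = spref X i ω)) /
    (pr p (fun ω' => spref Y i ω' = spref Y i ω ∧ spref X i ω' = spref X i ω) *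
      pr p (fun ω' => X ω' i = X ω i ∧ spref X i ω' = spref X i ω)) =
    (prAgree2 p X Y ω (i.1+1) i.1 * prAgree p X ω i.1) /
    (prAgree2 p X Y ω i.1 i.1 * prAgree p X ω (i.1+1)) := by
  have e1 : pr p (fun ω' => spref Y i ω' = spref Y i ω ∧ X ω' i = X ω i ∧
      spref X i ω' = spref X i ω) = prAgree2 p X Y ω (i.1+1) i.1 := by
    refine pr_congr p fun ω' => ?_
    simp only [prAgree2, spref_eq_iff, ← agree_succ_iff] <;> tauto
  have e2 : pr p (fun ω' => spref X i ω' = spref X i ω) = prAgree p X ω i.1 := by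
    refine pr_congr p fun ω' => ?_
    simp only [prAgree, spref_eq_iff]
  have e3 : pr p (fun ω' => spref Y i ω' = spref Y i ω ∧ spref X i ω' = spref X i ω) =
      prAgree2 p X Y ω i.1 i.1 := by
    refine pr_congr p fun ω' => ?_
    simp only [prAgree2, spref_eq_iff] <;> tauto
  have e4 : pr p (fun ω' => X ω' i = X ω i ∧ spref X i ω' = spref X i ω) =
      prAgree p X ω (i.1+1) := by
    refine pr_congr p fun ω' => ?_
    simp only [prAgree, spref_eq_iff, ← agree_succ_iff]
  rw [e1, e2, e3, e4]

lemma mterm_eq (p : Ω → ℝ) (hsum : ∑ ω, p ω = 1)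
    (X : Ω → Fin (n+1) → 𝒳) (Y : Ω → Fin (n+1) → 𝒴) (ω : Ω) :
    (pr p (fun ω' => X ω' = X ω ∧ Y ω' = Y ω ∧
        (fun _ : Ω => ()) ω' = (fun _ : Ω => ()) ω) *
      pr p (fun ω' => (fun _ : Ω => ()) ω' = (fun _ : Ω => ()) ω)) /
    (pr p (fun ω' => X ω' = X ω ∧ (fun _ : Ω => ()) ω' = (fun _ : Ω => ()) ω) *
      pr p (fun ω' => Y ω' = Y ω ∧ (fun _ : Ω => ()) ω' = (fun _ : Ω => ()) ω)) =
    (prAgree2 p X Y ω (n+1) (n+1) * 1) /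
    (prAgree p X ω (n+1) * prAgree p Y ω (n+1)) := by
  have e1 : pr p (fun ω' => X ω' = X ω ∧ Y ω' = Y ω ∧
      (fun _ : Ω => ()) ω' = (fun _ : Ω => ()) ω) = prAgree2 p X Y ω (n+1) (n+1) := by
    refine pr_congr p fun ω' => ?_
    simp only [prAgree2, fun_eq_iff] <;> tauto
  have e2 : pr p (fun ω' => (fun _ : Ω => ()) ω' = (fun _ : Ω => ()) ω) = 1 :=
    pr_one hsum fun ω' => rfl
  have e3 : pr p (fun ω' => X ω' = X ω ∧ (fun _ : Ω => ()) ω' = (fun _ : Ω => ()) ω) =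
      prAgree p X ω (n+1) := by
    refine pr_congr p fun ω' => ?_
    simp only [prAgree, fun_eq_iff] <;> tauto
  have e4 : pr p (fun ω' => Y ω' = Y ω ∧ (fun _ : Ω => ()) ω' = (fun _ : Ω => ()) ω) =
      prAgree p Y ω (n+1) := by
    refine pr_congr p fun ω' => ?_
    simp only [prAgree, fun_eq_iff] <;> tauto
  rw [e1, e2, e3, e4]

end Aux

lemma log_ratio {a b c d : ℝ} (ha : 0 < a) (hb : 0 < b) (hc : 0 < c) (hd : 0 < d) :
    Real.log (a * b / (c * d)) =
      Real.log a + Real.log b - Real.log c - Real.log d := by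
  rw [Real.log_div (mul_pos ha hb).ne' (mul_pos hc hd).ne',
    Real.log_mul ha.ne' hb.ne', Real.log_mul hc.ne' hd.ne']
  ring

/-- `I(X^n; Y^n) = I(X^n → Y^n) + I(X^n ← Y^n)`. -/
theorem mutInfo_eq_dirInfo_add_revDirInfo
    {Ω 𝒳 𝒴 : Type} [Fintype Ω] [Fintype 𝒳] [Fintype 𝒴] {n : ℕ}
    (p : Ω → ℝ) (hp : ∀ ω, 0 ≤ p ω) (hsum : ∑ ω, p ω = 1)
    (X : Ω → Fin (n + 1) → 𝒳) (Y : Ω → Fin (n + 1) → 𝒴) :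
    mutInfoRV p X Y = dirInfo p X Y + revDirInfo p X Y := by
  classical
  have hd : dirInfo p X Y = ∑ ω, ∑ i : Fin (n+1),
      p ω * Real.log ((prAgree2 p X Y ω (i.1+1) (i.1+1) * prAgree p Y ω i.1) /
        (prAgree2 p X Y ω (i.1+1) i.1 * prAgree p Y ω (i.1+1))) := by
    unfold dirInfo condMI
    rw [Finset.sum_comm]
    exact Finset.sum_congr rfl fun ω _ => Finset.sum_congr rfl fun i _ => by
      rw [dterm_eq p X Y i ω]
  have hr : revDirInfo p X Y = ∑ ω, ∑ i : Fin (n+1),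
      p ω * Real.log ((prAgree2 p X Y ω (i.1+1) i.1 * prAgree p X ω i.1) /
        (prAgree2 p X Y ω i.1 i.1 * prAgree p X ω (i.1+1))) := by
    unfold revDirInfo condMI
    rw [Finset.sum_comm]
    exact Finset.sum_congr rfl fun ω _ => Finset.sum_congr rfl fun i _ => by
      rw [rterm_eq p X Y i ω]
  have hm : mutInfoRV p X Y = ∑ ω,
      p ω * Real.log ((prAgree2 p X Y ω (n+1) (n+1) * 1) /
        (prAgree p X ω (n+1) * prAgree p Y ω (n+1))) := by
    unfold mutInfoRV condMI
    exact Finset.sum_congr rfl fun ω _ => by rw [mterm_eq p hsum X Y ω]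
  rw [hd, hr, hm, ← Finset.sum_add_distrib]
  refine Finset.sum_congr rfl fun ω _ => ?_
  rw [← Finset.sum_add_distrib]
  by_cases h0 : p ω = 0
  · simp [h0]
  have hpω : 0 < p ω := lt_of_le_of_ne (hp ω) (Ne.symm h0)
  have hA := prAgree_pos hp X hpω
  have hB := prAgree_pos hp Y hpω
  have hC := prAgree2_pos hp X Y hpω
  set G : ℕ → ℝ := fun k => Real.log (prAgree2 p X Y ω k k)
    - Real.log (prAgree p X ω k) - Real.log (prAgree p Y ω k) with hG
  have step : ∀ i : Fin (n+1),
      p ω * Real.log ((prAgree2 p X Y ω (i.1+1) (i.1+1) * prAgree p Y ω i.1) /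
        (prAgree2 p X Y ω (i.1+1) i.1 * prAgree p Y ω (i.1+1))) +
      p ω * Real.log ((prAgree2 p X Y ω (i.1+1) i.1 * prAgree p X ω i.1) /
        (prAgree2 p X Y ω i.1 i.1 * prAgree p X ω (i.1+1))) =
      p ω * (G (i.1+1) - G i.1) := by
    intro i
    rw [log_ratio (hC _ _) (hB _) (hC _ _) (hB _),
      log_ratio (hC _ _) (hA _) (hC _ _) (hA _)]
    simp only [hG]
    ring
  calc p ω * Real.log ((prAgree2 p X Y ω (n+1) (n+1) * 1) /
        (prAgree p X ω (n+1) * prAgree p Y ω (n+1)))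
      = p ω * (G (n+1) - G 0) := by
        simp only [hG]
        rw [log_ratio (hC _ _) one_pos (hA _) (hB _), Real.log_one,
          prAgree_zero hsum X ω, prAgree_zero hsum Y ω, prAgree2_zero hsum X Y ω,
          Real.log_one]
        ring
    _ = ∑ i : Fin (n+1), p ω * (G (i.1+1) - G i.1) := by
        rw [Fin.sum_univ_eq_sum_range (fun k => p ω * (G (k+1) - G k)) (n+1),
          ← Finset.mul_sum, Finset.sum_range_sub]
    _ = _ := (Finset.sum_congr rfl fun i _ => (step i)).symm
end

section
/- With the setup of the tilted kernel q*(y|x) = e^{s d(x,y)} ν*(y)/Z(x) whose output marginal equals ν*, for any other stochastic kernel q from X to Y, I(μ; q) ≥ s·E_{μ⊗q}[d] − Σ_x μ(x) log Z(x). Consequently if E_{μ⊗q}[d] ≤ E_{μ⊗q*}[d] and s ≤ 0, then I(μ;q) ≥ I(μ;q*), so q* achieves the rate distortion function at distortion level D = E_{μ⊗q*}[d]. -/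
open Finset

/-- `μ` is a probability mass function on a finite set. -/
def IsPMF {α : Type} [Fintype α] (μ : α → ℝ) : Prop :=
  (∀ a, 0 ≤ μ a) ∧ ∑ a, μ a = 1

/-- `q` is a stochastic kernel from `𝒳` to `𝒴`: each `q x ·` is a pmf on `𝒴`. -/
def IsKernel {𝒳 𝒴 : Type} [Fintype 𝒴] (q : 𝒳 → 𝒴 → ℝ) : Prop :=
  (∀ x y, 0 ≤ q x y) ∧ ∀ x, ∑ y, q x y = 1

/-- Mutual information `I(μ; q) = ∑_{x,y} μ(x) q(y|x) log(q(y|x)/ν(y))`,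
where `ν(y) = ∑_x μ(x) q(y|x)` is the output marginal. -/
noncomputable def mutInfo {𝒳 𝒴 : Type} [Fintype 𝒳] [Fintype 𝒴]
    (μ : 𝒳 → ℝ) (q : 𝒳 → 𝒴 → ℝ) : ℝ :=
  ∑ x, ∑ y, μ x * q x y * Real.log (q x y / (∑ x', μ x' * q x' y))

/-- Expected distortion `E_{μ⊗q}[d] = ∑_{x,y} μ(x) q(y|x) d(x,y)`. -/
noncomputable def avgDist {𝒳 𝒴 : Type} [Fintype 𝒳] [Fintype 𝒴]
    (μ : 𝒳 → ℝ) (q : 𝒳 → 𝒴 → ℝ) (d : 𝒳 → 𝒴 → ℝ) : ℝ :=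
  ∑ x, ∑ y, μ x * q x y * d x y

/-- The rate distortion function
`R(D) = inf { I(μ;q) : q a stochastic kernel, E_{μ⊗q}[d] ≤ D }`. -/
noncomputable def RD {𝒳 𝒴 : Type} [Fintype 𝒳] [Fintype 𝒴]
    (μ : 𝒳 → ℝ) (d : 𝒳 → 𝒴 → ℝ) (D : ℝ) : ℝ :=
  sInf {r | ∃ q : 𝒳 → 𝒴 → ℝ, IsKernel q ∧ avgDist μ q d ≤ D ∧ r = mutInfo μ q}

/-- for the tilted kernel `q*` whose output marginal equals `ν*`,
every stochastic kernel `q` satisfies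
`I(μ; q) ≥ s·E_{μ⊗q}[d] − ∑_x μ(x) log Z(x)`; consequently if
`E_{μ⊗q}[d] ≤ E_{μ⊗q*}[d]` then `I(μ; q) ≥ I(μ; q*)`, and `q*` achieves the
rate distortion function at `D = E_{μ⊗q*}[d]`. -/
theorem tilted_kernel_optimal {𝒳 𝒴 : Type} [Fintype 𝒳] [Fintype 𝒴]
    (μ : 𝒳 → ℝ) (hμ : IsPMF μ)
    (d : 𝒳 → 𝒴 → ℝ) (hd : ∀ x y, 0 ≤ d x y)
    (s : ℝ) (hs : s ≤ 0)
    (ν : 𝒴 → ℝ) (hν : IsPMF ν ∧ ∀ y, 0 < ν y)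
    (Z : 𝒳 → ℝ) (hZ : ∀ x, Z x = ∑ y', Real.exp (s * d x y') * ν y')
    (qstar : 𝒳 → 𝒴 → ℝ) (hqstar : ∀ x y, qstar x y = Real.exp (s * d x y) * ν y / Z x)
    (hfix : ∀ y, ν y = ∑ x, μ x * qstar x y)
    (q : 𝒳 → 𝒴 → ℝ) (hq : IsKernel q) :
    mutInfo μ q ≥ s * avgDist μ q d - ∑ x, μ x * Real.log (Z x) ∧
    (avgDist μ q d ≤ avgDist μ qstar d → mutInfo μ q ≥ mutInfo μ qstar) ∧
    RD μ d (avgDist μ qstar d) = mutInfo μ qstar := by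
  obtain ⟨hνpmf, hνpos⟩ := hν
  -- positivity of Z
  have hYne : (Finset.univ : Finset 𝒴).Nonempty := by
    by_contra h
    rw [Finset.not_nonempty_iff_eq_empty] at h
    have h1 := hνpmf.2
    rw [h] at h1
    simp at h1
  have hZpos : ∀ x, 0 < Z x := by
    intro x
    rw [hZ]
    exact Finset.sum_pos (fun y _ => mul_pos (Real.exp_pos _) (hνpos y)) hYne
  have hqs_pos : ∀ x y, 0 < qstar x y := by
    intro x y
    rw [hqstar]
    exact div_pos (mul_pos (Real.exp_pos _) (hνpos y)) (hZpos x)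
  have hqs_sum : ∀ x, ∑ y, qstar x y = 1 := by
    intro x
    have : ∀ y ∈ Finset.univ, qstar x y = Real.exp (s * d x y) * ν y / Z x :=
      fun y _ => hqstar x y
    rw [Finset.sum_congr rfl this, ← Finset.sum_div, ← hZ x, div_self (hZpos x).ne']
  have hqsK : IsKernel qstar := ⟨fun x y => (hqs_pos x y).le, hqs_sum⟩
  -- marginal identity from hfix
  have hmarg : ∀ y, ∑ x, μ x * (Real.exp (s * d x y) / Z x) = 1 := by
    intro y
    have e : ∀ x ∈ Finset.univ, μ x * (Real.exp (s * d x y) / Z x)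
        = μ x * qstar x y / ν y := by
      intro x _
      have h1 := (hνpos y).ne'
      have h2 := (hZpos x).ne'
      rw [hqstar]
      field_simp
    rw [Finset.sum_congr rfl e, ← Finset.sum_div, ← hfix y, div_self (hνpos y).ne']
  -- equality for qstar
  have heq : mutInfo μ qstar = s * avgDist μ qstar d - ∑ x, μ x * Real.log (Z x) := by
    have key : ∀ x y, Real.log (qstar x y / (∑ x', μ x' * qstar x' y))
        = s * d x y - Real.log (Z x) := by
      intro x y
      rw [← hfix y, hqstar]
      have h1 : Real.exp (s * d x y) * ν y / Z x / ν y = Real.exp (s * d x y) / Z x := by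
        have h2 := (hνpos y).ne'
        have h3 := (hZpos x).ne'
        field_simp
      rw [h1, Real.log_div (Real.exp_pos _).ne' (hZpos x).ne', Real.log_exp]
    unfold mutInfo avgDist
    rw [Finset.mul_sum, ← Finset.sum_sub_distrib]
    refine Finset.sum_congr rfl fun x _ => ?_
    have e1 : ∀ y ∈ Finset.univ, μ x * qstar x y * Real.log (qstar x y / (∑ x', μ x' * qstar x' y))
        = s * (μ x * qstar x y * d x y) - μ x * qstar x y * Real.log (Z x) := by
      intro y _
      rw [key x y]
      ring
    rw [Finset.sum_congr rfl e1, Finset.sum_sub_distrib, ← Finset.mul_sum]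
    congr 1
    have : ∀ y ∈ Finset.univ, μ x * qstar x y * Real.log (Z x)
        = qstar x y * (μ x * Real.log (Z x)) := fun y _ => by ring
    rw [Finset.sum_congr rfl this, ← Finset.sum_mul, hqs_sum x, one_mul]
  -- main inequality, for every kernel
  have glob : ∀ q' : 𝒳 → 𝒴 → ℝ, IsKernel q' →
      mutInfo μ q' ≥ s * avgDist μ q' d - ∑ x, μ x * Real.log (Z x) := by
    intro q' hq'
    set m : 𝒴 → ℝ := fun y => ∑ x', μ x' * q' x' y with hm
    have hm_nonneg : ∀ y, 0 ≤ m y :=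
      fun y => Finset.sum_nonneg fun x _ => mul_nonneg (hμ.1 x) (hq'.1 x y)
    have hm_sum : ∑ y, m y = 1 := by
      rw [hm]
      rw [Finset.sum_comm]
      have : ∀ x ∈ Finset.univ, ∑ y, μ x * q' x y = μ x := by
        intro x _
        rw [← Finset.mul_sum, hq'.2 x, mul_one]
      rw [Finset.sum_congr rfl this, hμ.2]
    -- pointwise inequality
    have hpt : ∀ x y, μ x * (q' x y - m y * Real.exp (s * d x y) / Z x)
        ≤ μ x * q' x y * (Real.log (q' x y / m y) - s * d x y + Real.log (Z x)) := by
      intro x y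
      rcases eq_or_lt_of_le (hμ.1 x) with hx | hx
      · rw [← hx]; ring_nf; rfl
      rcases eq_or_lt_of_le (hq'.1 x y) with hqxy | hqxy
      · rw [← hqxy]
        have : μ x * (0 - m y * Real.exp (s * d x y) / Z x) ≤ 0 := by
          have : 0 ≤ m y * Real.exp (s * d x y) / Z x :=
            div_nonneg (mul_nonneg (hm_nonneg y) (Real.exp_pos _).le) (hZpos x).le
          nlinarith
        simpa using this
      · have hmpos : 0 < m y := lt_of_lt_of_le (mul_pos hx hqxy)
          (Finset.single_le_sum (fun x' _ => mul_nonneg (hμ.1 x') (hq'.1 x' y))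
            (Finset.mem_univ x))
        set r := m y * Real.exp (s * d x y) / Z x with hr
        have hrpos : 0 < r := div_pos (mul_pos hmpos (Real.exp_pos _)) (hZpos x)
        have hlog : Real.log (q' x y / m y) - s * d x y + Real.log (Z x)
            = Real.log (q' x y / r) := by
          rw [Real.log_div hqxy.ne' hmpos.ne', Real.log_div hqxy.ne' hrpos.ne', hr,
            Real.log_div (mul_pos hmpos (Real.exp_pos _)).ne' (hZpos x).ne',
            Real.log_mul hmpos.ne' (Real.exp_pos _).ne', Real.log_exp]
          ring
        have key : q' x y - r ≤ q' x y * Real.log (q' x y / r) := by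
          have h2 := Real.log_le_sub_one_of_pos (div_pos hrpos hqxy)
          rw [Real.log_div hrpos.ne' hqxy.ne'] at h2
          have h3 : 1 - r / q' x y ≤ Real.log (q' x y / r) := by
            rw [Real.log_div hqxy.ne' hrpos.ne']
            linarith
          have h4 : q' x y * (1 - r / q' x y) ≤ q' x y * Real.log (q' x y / r) :=
            mul_le_mul_of_nonneg_left h3 hqxy.le
          have h5 : q' x y * (1 - r / q' x y) = q' x y - r := by
            field_simp
          linarith
        rw [hlog]
        calc μ x * (q' x y - r) ≤ μ x * (q' x y * Real.log (q' x y / r)) :=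
              mul_le_mul_of_nonneg_left key hx.le
          _ = μ x * q' x y * Real.log (q' x y / r) := by ring
    -- sum of the lower bounds is zero
    have hG : ∑ x, ∑ y, μ x * (q' x y - m y * Real.exp (s * d x y) / Z x) = 0 := by
      have e1 : ∑ x, ∑ y, μ x * q' x y = 1 := by
        have : ∀ x ∈ Finset.univ, ∑ y, μ x * q' x y = μ x := by
          intro x _
          rw [← Finset.mul_sum, hq'.2 x, mul_one]
        rw [Finset.sum_congr rfl this, hμ.2]
      have e2 : ∑ x, ∑ y, μ x * (m y * Real.exp (s * d x y) / Z x) = 1 := by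
        rw [Finset.sum_comm]
        have : ∀ y ∈ Finset.univ,
            ∑ x, μ x * (m y * Real.exp (s * d x y) / Z x) = m y := by
          intro y _
          have e : ∀ x ∈ Finset.univ, μ x * (m y * Real.exp (s * d x y) / Z x)
              = m y * (μ x * (Real.exp (s * d x y) / Z x)) := fun x _ => by ring
          rw [Finset.sum_congr rfl e, ← Finset.mul_sum, hmarg y, mul_one]
        rw [Finset.sum_congr rfl this, hm_sum]
      have split : ∀ x ∈ Finset.univ, ∑ y, μ x * (q' x y - m y * Real.exp (s * d x y) / Z x)
          = (∑ y, μ x * q' x y) - ∑ y, μ x * (m y * Real.exp (s * d x y) / Z x) := by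
        intro x _
        rw [← Finset.sum_sub_distrib]
        exact Finset.sum_congr rfl fun y _ => by ring
      rw [Finset.sum_congr rfl split, Finset.sum_sub_distrib, e1, e2, sub_self]
    -- total identity
    have h1 : ∑ x, ∑ y, μ x * q' x y * (Real.log (q' x y / m y) - s * d x y + Real.log (Z x))
        = mutInfo μ q' - s * avgDist μ q' d + ∑ x, μ x * Real.log (Z x) := by
      unfold mutInfo avgDist
      rw [Finset.mul_sum, ← Finset.sum_sub_distrib, ← Finset.sum_add_distrib]
      refine Finset.sum_congr rfl fun x _ => ?_
      have hz : μ x * Real.log (Z x) = ∑ y, μ x * q' x y * Real.log (Z x) := by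
        have e : ∀ y ∈ Finset.univ, μ x * q' x y * Real.log (Z x)
            = q' x y * (μ x * Real.log (Z x)) := fun y _ => by ring
        rw [Finset.sum_congr rfl e, ← Finset.sum_mul, hq'.2 x, one_mul]
      rw [hz, Finset.mul_sum, ← Finset.sum_sub_distrib, ← Finset.sum_add_distrib]
      exact Finset.sum_congr rfl fun y _ => by ring
    have hge : 0 ≤ ∑ x, ∑ y, μ x * q' x y *
        (Real.log (q' x y / m y) - s * d x y + Real.log (Z x)) := by
      rw [← hG]
      exact Finset.sum_le_sum fun x _ => Finset.sum_le_sum fun y _ => hpt x y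
    rw [h1] at hge
    linarith
  have main := glob q hq
  have mono : ∀ q'' : 𝒳 → 𝒴 → ℝ, IsKernel q'' → avgDist μ q'' d ≤ avgDist μ qstar d →
      mutInfo μ qstar ≤ mutInfo μ q'' := by
    intro q'' hk hle
    have h := glob q'' hk
    have hs' : s * avgDist μ qstar d ≤ s * avgDist μ q'' d :=
      mul_le_mul_of_nonpos_left hle hs
    rw [heq]
    linarith
  refine ⟨main, fun hle => mono q hq hle, ?_⟩
  unfold RD
  apply IsLeast.csInf_eq
  constructor
  · exact ⟨qstar, hqsK, le_refl _, rfl⟩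
  · rintro r ⟨q'', hk, hle, rfl⟩
    exact mono q'' hk hle
end
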